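/- Let p = log_4 3. For all reals x > 0 and 0 < γ ≤ 1, we have x^p + x^{2p} + γ^p ≥ (x+1)^p (x+γ)^p. -/

import Mathlib

open Real Set

noncomputable def Fn (p x : ℝ) : ℝ := 1 + x ^ p + x ^ (2*p) - (x+1) ^ (2*p)
noncomputable def Qn (p x : ℝ) : ℝ := 1 + 2*x ^ p - 2*(x^(1-p)*(x+1)^(2*p-1))
noncomputable def Q1 (p x : ℝ) : ℝ :=
  2*p*x^(p-1) - 2*(1-p)*(x^(-p)*(x+1)^(2*p-1)) - 2*(2*p-1)*(x^(1-p)*(x+1)^(2*p-2))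
noncomputable def Rn (p x : ℝ) : ℝ := p*x^2 + 2*(1-p)*x + p - p*(x^(2*p-1)*(x+1)^(3-2*p))

lemma hd_base {x : ℝ} (hx : 0 < x) (c : ℝ) :
    HasDerivAt (fun y : ℝ => y ^ c) (c * x^(c-1)) x :=
  Real.hasDerivAt_rpow_const (Or.inl hx.ne')

lemma hd_shift {x : ℝ} (hx : 0 < x) (c : ℝ) :
    HasDerivAt (fun y : ℝ => (y+1) ^ c) (c * (x+1)^(c-1)) x := by
  have h1 : HasDerivAt (fun y : ℝ => y + 1) 1 x := (hasDerivAt_id x).add_const 1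
  have hx1 : x + 1 ≠ 0 := by positivity
  have h2 := (Real.hasDerivAt_rpow_const (x := x+1) (p := c) (Or.inl hx1)).comp x h1
  simpa [Function.comp_def] using h2

lemma hd_F {p x : ℝ} (hx : 0 < x) : HasDerivAt (Fn p) (p * x^(p-1) * Qn p x) x := by
  have h : HasDerivAt (Fn p)
      (p * x^(p-1) + (2*p) * x^(2*p-1) - (2*p) * (x+1)^(2*p-1)) x := by
    unfold Fn
    exact (((hd_base hx p).const_add 1).add (hd_base hx (2*p))).sub (hd_shift hx (2*p))
  have e1 : x^(p-1) * x^p = x^(2*p-1) := by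
    rw [← Real.rpow_add hx]; congr 1; ring
  have e2 : x^(p-1) * x^(1-p) = 1 := by
    rw [← Real.rpow_add hx]; norm_num
  convert h using 1
  unfold Qn
  linear_combination (2*p) * e1 - (2*p)*(x+1)^(2*p-1) * e2

lemma hd_Q {p x : ℝ} (hx : 0 < x) : HasDerivAt (Qn p) (Q1 p x) x := by
  have hmul : HasDerivAt (fun y : ℝ => y^(1-p)*(y+1)^(2*p-1))
      ((1-p) * x^(1-p-1) * (x+1)^(2*p-1) + x^(1-p) * ((2*p-1) * (x+1)^(2*p-1-1))) x :=
    (hd_base hx (1-p)).mul (hd_shift hx (2*p-1))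
  have h : HasDerivAt (Qn p)
      (2 * (p * x^(p-1)) - 2 * ((1-p) * x^(1-p-1) * (x+1)^(2*p-1) + x^(1-p) * ((2*p-1) * (x+1)^(2*p-1-1)))) x := by
    unfold Qn
    exact (((hd_base hx p).const_mul 2).const_add 1).sub (hmul.const_mul 2)
  convert h using 1
  unfold Q1
  have e1 : x^(1-p-1) = x^(-p) := by congr 1; ring
  have e2 : (x+1)^(2*p-1-1) = (x+1)^(2*p-2) := by congr 1; ring
  rw [e1, e2]; ring

lemma hd_Q1 {p x : ℝ} (hx : 0 < x) : HasDerivAt (Q1 p)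
    (2*(1-p) * (x^(-p-1)*(x+1)^(2*p-3)) * Rn p x) x := by
  have hx1 : (0:ℝ) < x + 1 := by linarith
  have hm1 : HasDerivAt (fun y : ℝ => y^(-p)*(y+1)^(2*p-1))
      ((-p) * x^(-p-1) * (x+1)^(2*p-1) + x^(-p) * ((2*p-1) * (x+1)^(2*p-1-1))) x :=
    (hd_base hx (-p)).mul (hd_shift hx (2*p-1))
  have hm2 : HasDerivAt (fun y : ℝ => y^(1-p)*(y+1)^(2*p-2))
      ((1-p) * x^(1-p-1) * (x+1)^(2*p-2) + x^(1-p) * ((2*p-2) * (x+1)^(2*p-2-1))) x :=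
    (hd_base hx (1-p)).mul (hd_shift hx (2*p-2))
  have h : HasDerivAt (Q1 p)
      (2*p*((p-1) * x^(p-1-1))
        - 2*(1-p)*((-p) * x^(-p-1) * (x+1)^(2*p-1) + x^(-p) * ((2*p-1) * (x+1)^(2*p-1-1)))
        - 2*(2*p-1)*((1-p) * x^(1-p-1) * (x+1)^(2*p-2) + x^(1-p) * ((2*p-2) * (x+1)^(2*p-2-1)))) x := by
    unfold Q1
    exact (((hd_base hx (p-1)).const_mul (2*p)).sub (hm1.const_mul (2*(1-p)))).sub
      (hm2.const_mul (2*(2*p-1)))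
  convert h using 1
  unfold Rn
  have rp : ∀ a b : ℝ, x^a * x^b = x^(a+b) := fun a b => (Real.rpow_add hx a b).symm
  have rq : ∀ a b : ℝ, (x+1)^a * (x+1)^b = (x+1)^(a+b) := fun a b => (Real.rpow_add hx1 a b).symm
  have hx1' : x^(1:ℝ) = x := Real.rpow_one x
  have hq1 : (x+1)^(1:ℝ) = x+1 := Real.rpow_one (x+1)
  have i1 : x^(-p-1) * x^(2*p-1) = x^(p-1-1) := by rw [rp]; congr 1; ring
  have i2 : (x+1)^(2*p-3) * (x+1)^(3-2*p) = 1 := by rw [rq]; norm_num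
  have mo : ∀ a : ℝ, x^a * x = x^(a+1) := fun a => by
    calc x^a * x = x^a * x^(1:ℝ) := by rw [hx1']
    _ = x^(a+1) := rp a 1
  have mq : ∀ a : ℝ, (x+1)^a * (x+1) = (x+1)^(a+1) := fun a => by
    calc (x+1)^a * (x+1) = (x+1)^a * (x+1)^(1:ℝ) := by rw [hq1]
    _ = (x+1)^(a+1) := rq a 1
  have i3 : x^(-p) = x^(-p-1) * x := by rw [mo]; congr 1; ring
  have i4 : x^(1-p) = x^(-p-1) * x * x := by rw [mo, mo]; congr 1; ring
  have i5 : (x+1)^(2*p-1) = (x+1)^(2*p-3) * (x+1) * (x+1) := by rw [mq, mq]; congr 1; ring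
  have i6a : (x+1)^(2*p-1-1) = (x+1)^(2*p-3) * (x+1) := by rw [mq]; congr 1; ring
  have i6b : (x+1)^(2*p-2) = (x+1)^(2*p-3) * (x+1) := by rw [mq]; congr 1; ring
  have i7 : (x+1)^(2*p-2-1) = (x+1)^(2*p-3) := by congr 1; ring
  have i8 : x^(1-p-1) = x^(-p-1) * x := by rw [mo]; congr 1; ring
  rw [← i1, i3, i4, i5, i6a, i6b, i7, i8]
  linear_combination (-(2*p*(1-p)) * (x^(-p-1) * x^(2*p-1))) * i2

noncomputable def Ln (p x : ℝ) : ℝ :=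
  Real.log (p*x^2 + 2*(1-p)*x + p) - ((2*p-1)*Real.log x + (3-2*p)*Real.log (x+1))
noncomputable def L1 (p x : ℝ) : ℝ :=
  (2*p*x + 2*(1-p))/(p*x^2+2*(1-p)*x+p) - (2*p-1)/x - (3-2*p)/(x+1)

lemma num_pos {p x : ℝ} (hx : 0 < x) (hp0 : 0 < p) (hp1 : p < 1) :
    0 < p*x^2+2*(1-p)*x+p := by nlinarith [mul_pos hp0 (mul_pos hx hx)]

lemma hd_L {p x : ℝ} (hx : 0 < x) (hp0 : 0 < p) (hp1 : p < 1) :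
    HasDerivAt (Ln p) (L1 p x) x := by
  have hnum := num_pos hx hp0 hp1
  have hx1 : (0:ℝ) < x + 1 := by linarith
  have d_num : HasDerivAt (fun y:ℝ => p*y^2+2*(1-p)*y+p) (2*p*x + 2*(1-p)) x := by
    have h1 := (hasDerivAt_pow 2 x).const_mul p
    have h2 := (hasDerivAt_id x).const_mul (2*(1-p))
    have := (h1.add h2).add_const p
    convert this using 1
    · rfl
    · rfl
    · simp
    · simp; ring
  have dlog1 := (Real.hasDerivAt_log hnum.ne').comp x d_num
  have dlog2 := (Real.hasDerivAt_log hx.ne').const_mul (2*p-1)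
  have dlog3 := ((Real.hasDerivAt_log hx1.ne').comp x ((hasDerivAt_id x).add_const 1)).const_mul (3-2*p)
  have h := dlog1.sub (dlog2.add dlog3)
  have h' : HasDerivAt (Ln p)
      ((p*x^2+2*(1-p)*x+p)⁻¹ * (2*p*x + 2*(1-p)) - ((2*p-1)*x⁻¹ + (3-2*p)*((x+1)⁻¹*1))) x := by
    unfold Ln
    exact h
  convert h' using 1
  unfold L1
  field_simp
  ring

lemma L1_neg {p x : ℝ} (hx : 0 < x) (hx2 : x < 2) (hp4 : 3/4 < p) (hp1 : p < 1) :
    L1 p x < 0 := by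
  have hp0 : (0:ℝ) < p := by linarith
  have hnum := num_pos hx hp0 hp1
  have hx1 : (0:ℝ) < x + 1 := by linarith
  have e : (2*p-1)/x + (3-2*p)/(x+1) = (2*x+2*p-1)/(x*(x+1)) := by
    field_simp; ring
  have ha : (0:ℝ) < 2*p-1 := by linarith
  have hb : (0:ℝ) < 2-p := by linarith
  have hcc : (0:ℝ) < x*(2-x) := by nlinarith
  have key : (2*p*x + 2*(1-p)) * (x*(x+1)) < (2*x+2*p-1) * (p*x^2+2*(1-p)*x+p) := by
    nlinarith [mul_pos (mul_pos ha hb) hcc, mul_pos ha hp0]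
  have h2 : (2*p*x+2*(1-p))/(p*x^2+2*(1-p)*x+p) < (2*x+2*p-1)/(x*(x+1)) := by
    rw [div_lt_div_iff₀ hnum (by positivity)]; exact key
  unfold L1
  rw [sub_sub, e]
  linarith

lemma den_pos {p x : ℝ} (hx : 0 < x) : 0 < x^(2*p-1)*(x+1)^(3-2*p) :=
  mul_pos (Real.rpow_pos_of_pos hx _) (Real.rpow_pos_of_pos (by linarith) _)

lemma Rn_iff {p x : ℝ} (hx : 0 < x) (hp0 : 0 < p) (hp1 : p < 1) :
    (Rn p x ≤ 0 ↔ Ln p x ≤ Real.log p) := by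
  have hnum := num_pos hx hp0 hp1
  have hx1 : (0:ℝ) < x + 1 := by linarith
  have hden := den_pos (p := p) hx
  have e1 : Rn p x ≤ 0 ↔ p*x^2+2*(1-p)*x+p ≤ p * (x^(2*p-1)*(x+1)^(3-2*p)) := by
    unfold Rn; constructor <;> intro h <;> linarith
  have e2 : Real.log (p * (x^(2*p-1)*(x+1)^(3-2*p)))
      = Real.log p + ((2*p-1)*Real.log x + (3-2*p)*Real.log (x+1)) := by
    rw [Real.log_mul hp0.ne' (by positivity), Real.log_mul (by positivity) (by positivity),
      Real.log_rpow hx, Real.log_rpow hx1]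
  rw [e1, ← Real.log_le_log_iff hnum (by positivity), e2]
  unfold Ln
  constructor <;> intro h <;> linarith

lemma pR {p : ℝ} (hp4 : 3/4 < p) (hp1 : p < 1) {u v : ℝ} (hu : 0 < u) (huv : u ≤ v)
    (hv : v ≤ 1) (hRu : Rn p u ≤ 0) : Rn p v ≤ 0 := by
  have hp0 : (0:ℝ) < p := by linarith
  have hv0 : 0 < v := lt_of_lt_of_le hu huv
  have hL : AntitoneOn (Ln p) (Icc u v) := by
    apply antitoneOn_of_deriv_nonpos (convex_Icc u v)
    · intro t ht
      exact ((hd_L (lt_of_lt_of_le hu ht.1) hp0 hp1).continuousAt).continuousWithinAt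
    · intro t ht
      rw [interior_Icc] at ht
      exact (hd_L (hu.trans ht.1) hp0 hp1).differentiableAt.differentiableWithinAt
    · intro t ht
      rw [interior_Icc] at ht
      have h0t : 0 < t := hu.trans ht.1
      rw [(hd_L h0t hp0 hp1).deriv]
      exact (L1_neg h0t (by rcases ht with ⟨_, h2⟩; linarith) hp4 hp1).le
  have h1 : Ln p v ≤ Ln p u :=
    hL (left_mem_Icc.2 huv) (right_mem_Icc.2 huv) huv
  rw [Rn_iff hu hp0 hp1] at hRu
  rw [Rn_iff hv0 hp0 hp1]
  linarith


lemma rpow_2p1 {p : ℝ} (h3 : (2:ℝ)^(2*p) = 3) : (2:ℝ)^(2*p-1) = 3/2 := by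
  rw [Real.rpow_sub two_pos, Real.rpow_one, h3]

lemma rpow_2p2 {p : ℝ} (h3 : (2:ℝ)^(2*p) = 3) : (2:ℝ)^(2*p-2) = 3/4 := by
  rw [show 2*p-2 = (2*p-1)-1 by ring, Real.rpow_sub two_pos, Real.rpow_one, rpow_2p1 h3]
  norm_num

lemma Q1_one {p : ℝ} (hp4 : 3/4 < p) (h3 : (2:ℝ)^(2*p) = 3) : 0 < Q1 p 1 := by
  unfold Q1
  rw [Real.one_rpow, Real.one_rpow, Real.one_rpow, show ((1:ℝ)+1) = 2 by norm_num,
    rpow_2p1 h3, rpow_2p2 h3]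
  nlinarith

lemma Qn_one {p : ℝ} (h3 : (2:ℝ)^(2*p) = 3) : Qn p 1 = 0 := by
  unfold Qn
  rw [Real.one_rpow, Real.one_rpow, show ((1:ℝ)+1) = 2 by norm_num, rpow_2p1 h3]
  norm_num

lemma pQ1 {p : ℝ} (hp4 : 3/4 < p) (hp1 : p < 1) (h3 : (2:ℝ)^(2*p) = 3) {u v : ℝ}
    (hu : 0 < u) (huv : u ≤ v) (hv : v ≤ 1) (hQu : 0 ≤ Q1 p u) : 0 ≤ Q1 p v := by
  by_contra hneg
  push_neg at hneg
  have hlt : u < v := by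
    rcases eq_or_lt_of_le huv with rfl|h
    · exact absurd hQu (not_le.2 hneg)
    · exact h
  obtain ⟨c, hc, hc2⟩ := exists_hasDerivAt_eq_slope (Q1 p)
    (fun x => 2*(1-p) * (x^(-p-1)*(x+1)^(2*p-3)) * Rn p x) hlt
    (fun t ht => ((hd_Q1 (hu.trans_le ht.1)).continuousAt).continuousWithinAt)
    (fun t ht => hd_Q1 (hu.trans ht.1))
  have hc0 : 0 < c := hu.trans hc.1
  have hfac : 0 < 2*(1-p) * (c^(-p-1)*(c+1)^(2*p-3)) := by
    have := Real.rpow_pos_of_pos hc0 (-p-1)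
    have := Real.rpow_pos_of_pos (show (0:ℝ) < c+1 by linarith) (2*p-3)
    have : (0:ℝ) < 1 - p := by linarith
    positivity
  have hslope : (Q1 p v - Q1 p u) / (v - u) < 0 :=
    div_neg_of_neg_of_pos (by linarith) (by linarith)
  have hRc : Rn p c ≤ 0 := by
    by_contra hR
    push_neg at hR
    nlinarith [hc2, mul_pos hfac hR]
  -- Q1 antitone on [v,1]
  have hA : AntitoneOn (Q1 p) (Icc v 1) := by
    apply antitoneOn_of_deriv_nonpos (convex_Icc v 1)
    · intro t ht
      exact ((hd_Q1 ((hu.trans hlt).trans_le ht.1)).continuousAt).continuousWithinAt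
    · intro t ht
      rw [interior_Icc] at ht
      exact (hd_Q1 ((hu.trans hlt).trans ht.1)).differentiableAt.differentiableWithinAt
    · intro t ht
      rw [interior_Icc] at ht
      have h0t : 0 < t := (hu.trans hlt).trans ht.1
      rw [(hd_Q1 h0t).deriv]
      have hRt : Rn p t ≤ 0 := pR hp4 hp1 hc0 ((hc.2.trans ht.1).le) ht.2.le hRc
      have hfac' : 0 < 2*(1-p) * (t^(-p-1)*(t+1)^(2*p-3)) := by
        have := Real.rpow_pos_of_pos h0t (-p-1)
        have := Real.rpow_pos_of_pos (show (0:ℝ) < t+1 by linarith) (2*p-3)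
        have : (0:ℝ) < 1 - p := by linarith
        positivity
      exact mul_nonpos_of_nonneg_of_nonpos hfac'.le hRt
  have : Q1 p 1 ≤ Q1 p v := hA (left_mem_Icc.2 hv) (right_mem_Icc.2 hv) hv
  linarith [Q1_one hp4 h3]


lemma pQ {p : ℝ} (hp4 : 3/4 < p) (hp1 : p < 1) (h3 : (2:ℝ)^(2*p) = 3) {u v : ℝ}
    (hu : 0 < u) (huv : u ≤ v) (hv : v ≤ 1) (hQu : Qn p u ≤ 0) : Qn p v ≤ 0 := by
  by_contra hneg
  push_neg at hneg
  have hlt : u < v := by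
    rcases eq_or_lt_of_le huv with rfl|h
    · exact absurd hQu (not_le.2 hneg)
    · exact h
  obtain ⟨c, hc, hc2⟩ := exists_hasDerivAt_eq_slope (Qn p) (Q1 p) hlt
    (fun t ht => ((hd_Q (hu.trans_le ht.1)).continuousAt).continuousWithinAt)
    (fun t ht => hd_Q (hu.trans ht.1))
  have hc0 : 0 < c := hu.trans hc.1
  have hQ1c : 0 ≤ Q1 p c := by
    rw [hc2]
    exact (div_pos (by linarith) (by linarith)).le
  have hM : MonotoneOn (Qn p) (Icc v 1) := by
    apply monotoneOn_of_deriv_nonneg (convex_Icc v 1)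
    · intro t ht
      exact ((hd_Q ((hu.trans hlt).trans_le ht.1)).continuousAt).continuousWithinAt
    · intro t ht
      rw [interior_Icc] at ht
      exact (hd_Q ((hu.trans hlt).trans ht.1)).differentiableAt.differentiableWithinAt
    · intro t ht
      rw [interior_Icc] at ht
      rw [(hd_Q ((hu.trans hlt).trans ht.1)).deriv]
      exact pQ1 hp4 hp1 h3 hc0 (hc.2.trans ht.1).le ht.2.le hQ1c
  have : Qn p v ≤ Qn p 1 := hM (left_mem_Icc.2 hv) (right_mem_Icc.2 hv) hv
  rw [Qn_one h3] at this
  linarith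

lemma stepTwoCore {p : ℝ} (hp4 : 3/4 < p) (hp1 : p < 1) (h3 : (2:ℝ)^(2*p) = 3) {x : ℝ}
    (hx : 0 < x) (hx1 : x ≤ 1) : 0 ≤ Fn p x := by
  have hp0 : (0:ℝ) < p := by linarith
  by_cases hcase : ∃ u, 0 < u ∧ u < x ∧ Qn p u ≤ 0
  · obtain ⟨u, hu0, hux, hQu⟩ := hcase
    have hA : AntitoneOn (Fn p) (Icc x 1) := by
      apply antitoneOn_of_deriv_nonpos (convex_Icc x 1)
      · intro t ht
        exact ((hd_F (hx.trans_le ht.1)).continuousAt).continuousWithinAt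
      · intro t ht
        rw [interior_Icc] at ht
        exact (hd_F (hx.trans ht.1)).differentiableAt.differentiableWithinAt
      · intro t ht
        rw [interior_Icc] at ht
        have h0t : 0 < t := hx.trans ht.1
        rw [(hd_F h0t).deriv]
        have hQt : Qn p t ≤ 0 := pQ hp4 hp1 h3 hu0 (hux.trans ht.1).le ht.2.le hQu
        have : (0:ℝ) < p * t^(p-1) := mul_pos hp0 (Real.rpow_pos_of_pos h0t _)
        exact mul_nonpos_of_nonneg_of_nonpos this.le hQt
    have h1 : Fn p 1 ≤ Fn p x := hA (left_mem_Icc.2 hx1) (right_mem_Icc.2 hx1) hx1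
    have e : Fn p 1 = 0 := by
      show 1 + (1:ℝ)^p + (1:ℝ)^(2*p) - ((1:ℝ)+1)^(2*p) = 0
      rw [Real.one_rpow, Real.one_rpow, show ((1:ℝ)+1) = 2 by norm_num, h3]
      norm_num
    linarith
  · push_neg at hcase
    have hM : MonotoneOn (Fn p) (Icc 0 x) := by
      apply monotoneOn_of_deriv_nonneg (convex_Icc 0 x)
      · intro t ht
        apply ContinuousAt.continuousWithinAt
        show ContinuousAt (fun y : ℝ => 1 + y^p + y^(2*p) - (y+1)^(2*p)) t
        have c1 : ContinuousAt (fun y : ℝ => y ^ p) t :=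
          Real.continuousAt_rpow_const t p (Or.inr hp0.le)
        have c2 : ContinuousAt (fun y : ℝ => y ^ (2*p)) t :=
          Real.continuousAt_rpow_const t (2*p) (Or.inr (by linarith))
        have c3 : ContinuousAt (fun y : ℝ => (y+1) ^ (2*p)) t := by
          have hb : ContinuousAt (fun y : ℝ => y + 1) t := by fun_prop
          have ho := Real.continuousAt_rpow_const (t+1) (2*p) (Or.inl (by nlinarith [ht.1]))
          have := ContinuousAt.comp (g := fun y : ℝ => y ^ (2*p)) (f := fun y : ℝ => y + 1) ho hb
          exact this
        exact ((continuousAt_const.add c1).add c2).sub c3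
      · intro t ht
        rw [interior_Icc] at ht
        exact (hd_F ht.1).differentiableAt.differentiableWithinAt
      · intro t ht
        rw [interior_Icc] at ht
        rw [(hd_F ht.1).deriv]
        have hQt : 0 < Qn p t := hcase t ht.1 ht.2
        have : (0:ℝ) < p * t^(p-1) := mul_pos hp0 (Real.rpow_pos_of_pos ht.1 _)
        nlinarith
    have h1 : Fn p 0 ≤ Fn p x := hM (left_mem_Icc.2 hx.le) (right_mem_Icc.2 hx.le) hx.le
    have e : Fn p 0 = 0 := by
      show 1 + (0:ℝ)^p + (0:ℝ)^(2*p) - ((0:ℝ)+1)^(2*p) = 0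
      rw [Real.zero_rpow hp0.ne', Real.zero_rpow (by linarith : 2*p ≠ 0),
        show ((0:ℝ)+1) = 1 by norm_num, Real.one_rpow]
      norm_num
    linarith

lemma rpow_subadd {p : ℝ} (hp0 : 0 ≤ p) (hp1 : p ≤ 1) {x y : ℝ} (hx : 0 ≤ x) (hy : 0 ≤ y) :
    (x + y) ^ p ≤ x ^ p + y ^ p := by
  have h := NNReal.rpow_add_le_add_rpow x.toNNReal y.toNNReal hp0 hp1
  have h2 := NNReal.coe_le_coe.2 h
  push_cast at h2
  rwa [Real.coe_toNNReal x hx, Real.coe_toNNReal y hy] at h2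

lemma pfacts1 : 3/4 < Real.logb 4 3 ∧ Real.logb 4 3 < 1 := by
  have h4 : (0:ℝ) < Real.log 4 := Real.log_pos (by norm_num)
  constructor
  · rw [Real.logb, lt_div_iff₀ h4]
    have h : Real.log 64 < Real.log 81 := Real.log_lt_log (by norm_num) (by norm_num)
    have e1 : Real.log 64 = 3 * Real.log 4 := by
      rw [show (64:ℝ) = 4 ^ (3:ℕ) by norm_num, Real.log_pow]; push_cast; ring
    have e2 : Real.log 81 = 4 * Real.log 3 := by
      rw [show (81:ℝ) = 3 ^ (4:ℕ) by norm_num, Real.log_pow]; push_cast; ring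
    nlinarith
  · rw [Real.logb, div_lt_one h4]
    exact Real.log_lt_log (by norm_num) (by norm_num)

lemma pfacts2 : (2:ℝ) ^ (2 * Real.logb 4 3) = 3 := by
  have e4 : Real.log 4 = 2 * Real.log 2 := by
    rw [show (4:ℝ) = 2 ^ (2:ℕ) by norm_num, Real.log_pow]; push_cast; ring
  have h2 : Real.log 2 ≠ 0 := ne_of_gt (Real.log_pos (by norm_num))
  have e : 2 * Real.logb 4 3 = Real.logb 2 3 := by
    rw [Real.logb, Real.logb, e4]; field_simp
  rw [e]
  exact Real.rpow_logb (by norm_num) (by norm_num) (by norm_num)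

lemma stepTwo {p : ℝ} (hp4 : 3/4 < p) (hp1 : p < 1) (h3 : (2:ℝ)^(2*p) = 3) {x : ℝ}
    (hx : 0 < x) : (x+1)^(2*p) ≤ 1 + x^p + x^(2*p) := by
  rcases le_or_gt x 1 with h|h
  · have := stepTwoCore hp4 hp1 h3 hx h
    unfold Fn at this
    linarith
  · have hix : 0 < 1/x := by positivity
    have hF := stepTwoCore hp4 hp1 h3 hix (by rw [div_le_one hx]; linarith)
    unfold Fn at hF
    have h2p : x^(2*p) = x^p * x^p := by rw [← Real.rpow_add hx]; congr 1; ring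
    have hxp := Real.rpow_pos_of_pos hx p
    have hx2p := Real.rpow_pos_of_pos hx (2*p)
    have e1 : x^(2*p) * (1/x)^p = x^p := by
      rw [one_div, Real.inv_rpow hx.le, h2p]; field_simp
    have e2 : x^(2*p) * (1/x)^(2*p) = 1 := by
      rw [one_div, Real.inv_rpow hx.le]; field_simp
    have e3 : x^(2*p) * (1/x+1)^(2*p) = (x+1)^(2*p) := by
      rw [← Real.mul_rpow hx.le (by positivity)]
      congr 1; field_simp; ring
    have hmul := mul_le_mul_of_nonneg_left
      (show (1/x+1)^(2*p) ≤ 1 + (1/x)^p + (1/x)^(2*p) by linarith) hx2p.le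
    rw [mul_add, mul_add, mul_one, e1, e2, e3] at hmul
    linarith

theorem stmt_4 (p : ℝ) (hp : p = Real.logb 4 3) (x γ : ℝ)
    (hx : 0 < x) (hγ0 : 0 < γ) (hγ1 : γ ≤ 1) :
    x ^ p + x ^ (2 * p) + γ ^ p ≥ (x + 1) ^ p * (x + γ) ^ p := by
  have hp4 : 3/4 < p := hp ▸ pfacts1.1
  have hp1 : p < 1 := hp ▸ pfacts1.2
  have h3 : (2:ℝ)^(2*p) = 3 := by rw [hp]; exact pfacts2
  have hp0 : (0:ℝ) < p := by linarith
  have hq0 : (0:ℝ) < 1 - p := by linarith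
  obtain ⟨K, hK⟩ : ∃ K, K = (x+1)^p := ⟨_, rfl⟩
  rw [← hK]
  have hKpos : 0 < K := by
    rw [hK]; exact Real.rpow_pos_of_pos (show (0:ℝ) < x+1 by linarith) p
  have hK1 : 1 ≤ K := by
    rw [hK]
    have := Real.rpow_le_rpow (by norm_num : (0:ℝ) ≤ 1) (by linarith : (1:ℝ) ≤ x+1) hp0.le
    rwa [Real.one_rpow] at this
  -- derivative of h t = t^p - K*(x+t)^p
  have hd_h : ∀ t : ℝ, 0 < t → HasDerivAt (fun t => t^p - K*(x+t)^p)
      (p*t^(p-1) - K*(p*(x+t)^(p-1))) t := by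
    intro t ht
    have hxt : (0:ℝ) < x + t := by linarith
    have d1 : HasDerivAt (fun s : ℝ => s ^ p) (p * t^(p-1)) t :=
      Real.hasDerivAt_rpow_const (Or.inl ht.ne')
    have db : HasDerivAt (fun s : ℝ => x + s) 1 t := (hasDerivAt_id t).const_add x
    have d2 := (Real.hasDerivAt_rpow_const (x := x+t) (p := p) (Or.inl hxt.ne')).comp t db
    simp only [mul_one] at d2
    exact d1.sub (d2.const_mul K)
  -- key sign criterion
  have crit_pos : ∀ t : ℝ, 0 < t → t < γ → 0 ≤ (x+γ)^(1-p) - K*γ^(1-p) →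
      0 ≤ p*t^(p-1) - K*(p*(x+t)^(p-1)) := by
    intro t ht htγ hW
    have hxt : (0:ℝ) < x + t := by linarith
    have hxγ : (0:ℝ) < x + γ := by linarith
    have hstep : (x+γ)^(1-p) * t^(1-p) ≤ (x+t)^(1-p) * γ^(1-p) := by
      rw [← Real.mul_rpow hxγ.le ht.le, ← Real.mul_rpow hxt.le hγ0.le]
      apply Real.rpow_le_rpow (by positivity) (by nlinarith) hq0.le
    have hB : (0:ℝ) < (x+t)^(1-p) := Real.rpow_pos_of_pos hxt _
    have hA : (0:ℝ) < t^(1-p) := Real.rpow_pos_of_pos ht _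
    have hG : (0:ℝ) < γ^(1-p) := Real.rpow_pos_of_pos hγ0 _
    have hmain : K * t^(1-p) ≤ (x+t)^(1-p) := by
      have h1 : K * γ^(1-p) * t^(1-p) ≤ (x+t)^(1-p) * γ^(1-p) := by
        calc K * γ^(1-p) * t^(1-p) ≤ (x+γ)^(1-p) * t^(1-p) := by nlinarith
        _ ≤ (x+t)^(1-p) * γ^(1-p) := hstep
      have := (mul_le_mul_iff_of_pos_right hG).1 (by linarith [h1] : K * t^(1-p) * γ^(1-p) ≤ (x+t)^(1-p) * γ^(1-p))
      exact this
    have r1 : t^(p-1) = (t^(1-p))⁻¹ := by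
      rw [← Real.rpow_neg ht.le]; congr 1; ring
    have r2 : (x+t)^(p-1) = ((x+t)^(1-p))⁻¹ := by
      rw [← Real.rpow_neg hxt.le]; congr 1; ring
    have key : K * (x+t)^(p-1) ≤ t^(p-1) := by
      rw [r1, r2, ← div_eq_mul_inv, ← one_div, div_le_div_iff₀ hB hA]
      nlinarith
    nlinarith
  have crit_neg : ∀ t : ℝ, γ < t → (x+γ)^(1-p) - K*γ^(1-p) < 0 →
      p*t^(p-1) - K*(p*(x+t)^(p-1)) ≤ 0 := by
    intro t ht hW
    have ht0 : 0 < t := hγ0.trans ht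
    have hxt : (0:ℝ) < x + t := by linarith
    have hxγ : (0:ℝ) < x + γ := by linarith
    have hstep : (x+t)^(1-p) * γ^(1-p) ≤ (x+γ)^(1-p) * t^(1-p) := by
      rw [← Real.mul_rpow hxt.le hγ0.le, ← Real.mul_rpow hxγ.le ht0.le]
      apply Real.rpow_le_rpow (by positivity) (by nlinarith) hq0.le
    have hB : (0:ℝ) < (x+t)^(1-p) := Real.rpow_pos_of_pos hxt _
    have hA : (0:ℝ) < t^(1-p) := Real.rpow_pos_of_pos ht0 _
    have hG : (0:ℝ) < γ^(1-p) := Real.rpow_pos_of_pos hγ0 _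
    have hmain : (x+t)^(1-p) ≤ K * t^(1-p) := by
      have h1 : (x+t)^(1-p) * γ^(1-p) ≤ K * t^(1-p) * γ^(1-p) := by
        calc (x+t)^(1-p) * γ^(1-p) ≤ (x+γ)^(1-p) * t^(1-p) := hstep
        _ ≤ K * γ^(1-p) * t^(1-p) := by nlinarith
        _ = K * t^(1-p) * γ^(1-p) := by ring
      exact (mul_le_mul_iff_of_pos_right hG).1 h1
    have r1 : t^(p-1) = (t^(1-p))⁻¹ := by
      rw [← Real.rpow_neg ht0.le]; congr 1; ring
    have r2 : (x+t)^(p-1) = ((x+t)^(1-p))⁻¹ := by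
      rw [← Real.rpow_neg hxt.le]; congr 1; ring
    have key : t^(p-1) ≤ K * (x+t)^(p-1) := by
      rw [r1, r2, ← div_eq_mul_inv, ← one_div, div_le_div_iff₀ hA hB]
      nlinarith
    nlinarith
  rcases le_or_gt 0 ((x+γ)^(1-p) - K*γ^(1-p)) with hW|hW
  · -- case 1 : h monotone on [0, γ], h γ ≥ h 0 = -K x^p
    have hM : MonotoneOn (fun t => t^p - K*(x+t)^p) (Icc 0 γ) := by
      apply monotoneOn_of_deriv_nonneg (convex_Icc 0 γ)
      · intro t ht
        apply ContinuousAt.continuousWithinAt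
        have c1 : ContinuousAt (fun s : ℝ => s ^ p) t :=
          Real.continuousAt_rpow_const t p (Or.inr hp0.le)
        have hb : ContinuousAt (fun s : ℝ => x + s) t := by fun_prop
        have ho := Real.continuousAt_rpow_const (x+t) p (Or.inl (by nlinarith [ht.1]))
        have c2 := ContinuousAt.comp (g := fun s : ℝ => s ^ p) (f := fun s : ℝ => x + s) ho hb
        simp only [Function.comp_def] at c2
        exact c1.sub (c2.const_mul K)
      · intro t ht
        rw [interior_Icc] at ht
        exact (hd_h t ht.1).differentiableAt.differentiableWithinAt
      · intro t ht
        rw [interior_Icc] at ht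
        rw [(hd_h t ht.1).deriv]
        exact crit_pos t ht.1 ht.2 hW
    have h1 : (fun t => t^p - K*(x+t)^p) 0 ≤ (fun t => t^p - K*(x+t)^p) γ :=
      hM (left_mem_Icc.2 hγ0.le) (right_mem_Icc.2 hγ0.le) hγ0.le
    simp only [Real.zero_rpow hp0.ne', add_zero, zero_sub] at h1
    -- h1 : -(K * x^p) ≤ γ^p - K*(x+γ)^p
    have hsub : (x+1)^p ≤ x^p + 1 := by
      have := rpow_subadd hp0.le hp1.le hx.le (zero_le_one (α := ℝ))
      rwa [Real.one_rpow] at this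
    have h2p : x^(2*p) = x^p * x^p := by rw [← Real.rpow_add hx]; congr 1; ring
    have hxp := Real.rpow_pos_of_pos hx p
    have hKx : K * x^p ≤ x^(2*p) + x^p := by
      rw [hK, h2p]
      nlinarith [mul_le_mul_of_nonneg_right hsub hxp.le]
    linarith [h1, hKx]
  · -- case 2 : h antitone on [γ, 1], h γ ≥ h 1 = 1 - (x+1)^(2p)
    have hA : AntitoneOn (fun t => t^p - K*(x+t)^p) (Icc γ 1) := by
      apply antitoneOn_of_deriv_nonpos (convex_Icc γ 1)
      · intro t ht
        apply ContinuousAt.continuousWithinAt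
        have ht0 : 0 < t := lt_of_lt_of_le hγ0 ht.1
        have c1 : ContinuousAt (fun s : ℝ => s ^ p) t :=
          Real.continuousAt_rpow_const t p (Or.inr hp0.le)
        have hb : ContinuousAt (fun s : ℝ => x + s) t := by fun_prop
        have ho := Real.continuousAt_rpow_const (x+t) p (Or.inl (by nlinarith))
        have c2 := ContinuousAt.comp (g := fun s : ℝ => s ^ p) (f := fun s : ℝ => x + s) ho hb
        simp only [Function.comp_def] at c2
        exact c1.sub (c2.const_mul K)
      · intro t ht
        rw [interior_Icc] at ht
        exact (hd_h t (hγ0.trans ht.1)).differentiableAt.differentiableWithinAt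
      · intro t ht
        rw [interior_Icc] at ht
        rw [(hd_h t (hγ0.trans ht.1)).deriv]
        exact crit_neg t ht.1 hW
    have h1 : (fun t => t^p - K*(x+t)^p) 1 ≤ (fun t => t^p - K*(x+t)^p) γ :=
      hA (left_mem_Icc.2 hγ1) (right_mem_Icc.2 hγ1) hγ1
    simp only [Real.one_rpow] at h1
    -- h1 : 1 - K*(x+1)^p ≤ γ^p - K*(x+γ)^p
    have hKK : K * (x+1)^p = (x+1)^(2*p) := by
      rw [hK, ← Real.rpow_add (by linarith : (0:ℝ) < x+1)]; congr 1; ring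
    have hst := stepTwo hp4 hp1 h3 hx
    rw [hKK] at h1
    linarith
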